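/- arXiv:2204.01435 — 5 statements merged into one kernel-verified Lean document; each statement's English description precedes it below -/
import Mathlib

section
/- Let T > 0, let H : ℝ × ℝ → ℝ be C² and uniformly convex in its second variable, let L be the Legendre transform of H, let ϖ : [0,T] → ℝ be continuous, and let u ∈ C¹([0,T] × ℝ) satisfy the Hamilton–Jacobi equation -u_t(t,x) + H(x, ϖ(t) + u_x(t,x)) = 0 on [0,T] × ℝ with u(T,x) = u_T(x). Then for every t ∈ [0,T], every x₀ ∈ ℝ, and every C¹ trajectory x : [t,T] → ℝ with x(t) = x₀, one has ∫_t^T [ L(x(s), ẋ(s)) + ϖ(s) ẋ(s) ] ds + u_T(x(T)) ≥ u(t, x₀). -/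
open Real Set MeasureTheory intervalIntegral

lemma quad_lower_of_deriv2 {θ : ℝ} (f : ℝ → ℝ) (hf : ContDiff ℝ 2 f)
    (h2 : ∀ p, θ ≤ deriv (deriv f) p) :
    ∀ p, f 0 + deriv f 0 * p + θ / 2 * p ^ 2 ≤ f p := by
  have h21 : (2 : WithTop ℕ∞) = 1 + 1 := by norm_num
  rw [h21, contDiff_succ_iff_deriv] at hf
  obtain ⟨hfd, -, hf1⟩ := hf
  have hf1d : Differentiable ℝ (deriv f) := hf1.differentiable one_ne_zero
  -- χ := deriv f - θ * id is monotone
  have hχ : Monotone (fun p => deriv f p - θ * p) := by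
    refine monotone_of_deriv_nonneg (by fun_prop) fun x => ?_
    have : deriv (fun p => deriv f p - θ * p) x = deriv (deriv f) x - θ := by
      have h1 : HasDerivAt (fun p => deriv f p - θ * p) (deriv (deriv f) x - θ * 1) x :=
        ((hf1d x).hasDerivAt).sub ((hasDerivAt_id x).const_mul θ)
      simpa using h1.deriv
    rw [this]; linarith [h2 x]
  -- ψ := f - affine - quadratic
  set ψ : ℝ → ℝ := fun p => f p - f 0 - deriv f 0 * p - θ / 2 * p ^ 2 with hψ
  have hψd : ∀ x, HasDerivAt ψ (deriv f x - deriv f 0 - θ * x) x := by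
    intro x
    have h1 : HasDerivAt (fun p : ℝ => θ / 2 * p ^ 2) (θ / 2 * (2 * x)) x := by
      simpa using ((hasDerivAt_pow 2 x).const_mul (θ / 2))
    have := (((hfd x).hasDerivAt.sub_const (f 0)).sub
      ((hasDerivAt_id x).const_mul (deriv f 0))).sub h1
    exact this.congr_deriv (by ring)
  have hψdiff : Differentiable ℝ ψ := fun x => (hψd x).differentiableAt
  have hψderiv : ∀ x, deriv ψ x = deriv f x - deriv f 0 - θ * x := fun x => (hψd x).deriv
  intro p
  have key : (0 : ℝ) ≤ ψ p := by
    rcases le_total 0 p with hp | hp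
    · have hm : MonotoneOn ψ (Ici 0) := by
        refine monotoneOn_of_deriv_nonneg (convex_Ici 0) hψdiff.continuous.continuousOn
          hψdiff.differentiableOn fun x hx => ?_
        rw [interior_Ici] at hx
        have := hχ (le_of_lt hx)
        rw [hψderiv]; simp only at this ⊢; linarith
      have := hm (self_mem_Ici) hp hp
      simpa [hψ] using this
    · have hm : AntitoneOn ψ (Iic 0) := by
        refine antitoneOn_of_deriv_nonpos (convex_Iic 0) hψdiff.continuous.continuousOn
          hψdiff.differentiableOn fun x hx => ?_
        rw [interior_Iic] at hx
        have := hχ (le_of_lt hx)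
        rw [hψderiv]; simp only at this ⊢; linarith
      have := hm hp self_mem_Iic hp
      simpa [hψ] using this
  simp only [hψ] at key; linarith

lemma legendre_measurable (H L : ℝ → ℝ → ℝ)
    (hH : Continuous (fun q : ℝ × ℝ => H q.1 q.2))
    (hL : ∀ x v : ℝ, IsLUB {z : ℝ | ∃ p : ℝ, z = -p * v - H x p} (L x v)) :
    Measurable (fun q : ℝ × ℝ => L q.1 q.2) := by
  refine Measurable.isLUB (f := fun (q : ℚ) (xv : ℝ × ℝ) => -(q : ℝ) * xv.2 - H xv.1 q)
    (fun q => (((continuous_const.mul continuous_snd).sub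
      (hH.comp (continuous_fst.prodMk continuous_const))).measurable)) ?_
  rintro ⟨x, v⟩
  obtain ⟨hub, hlub⟩ := hL x v
  constructor
  · rintro z ⟨q, rfl⟩
    exact hub ⟨(q : ℝ), rfl⟩
  · intro b hb
    refine hlub ?_
    rintro z ⟨p, rfl⟩
    -- approximate p by rationals
    set g : ℝ → ℝ := fun p' => -p' * v - H x p' with hg
    have hgc : Continuous g := by
      have : Continuous (fun p' : ℝ => H x p') := hH.comp (continuous_const.prodMk continuous_id)
      fun_prop
    have hdense : p ∈ closure (range ((↑) : ℚ → ℝ)) := by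
      rw [Rat.denseRange_cast.closure_range]; trivial
    have himg : g p ∈ closure (g '' range ((↑) : ℚ → ℝ)) :=
      (image_closure_subset_closure_image hgc) ⟨p, hdense, rfl⟩
    have hsub : g '' range ((↑) : ℚ → ℝ) ⊆ {z | z ≤ b} := by
      rintro _ ⟨_, ⟨q, rfl⟩, rfl⟩
      exact hb ⟨q, rfl⟩
    have : g p ∈ {z : ℝ | z ≤ b} :=
      (closure_minimal hsub (isClosed_le continuous_id continuous_const)) himg
    exact this

/-- Hamilton–Jacobi verification inequality.
If `u` is a `C¹` solution of the Hamilton–Jacobi equation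
`-u_t + H(x, ϖ(t) + u_x) = 0` with terminal condition `u(T,·) = uT`, where `H` is `C²`
and uniformly convex in its second variable and `L` is the Legendre transform of `H`,
then along every `C¹` trajectory `x(·)` starting at `x₀` at time `t`,
`∫_t^T [L(x(s), ẋ(s)) + ϖ(s) ẋ(s)] ds + uT(x(T)) ≥ u(t, x₀)`. -/
theorem hj_verification_inequality
    (T : ℝ) (hT : 0 < T)
    (H : ℝ → ℝ → ℝ) (L : ℝ → ℝ → ℝ) (ϖ : ℝ → ℝ) (u : ℝ → ℝ → ℝ) (uT : ℝ → ℝ)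
    -- H is C²
    (hH : ContDiff ℝ 2 (fun q : ℝ × ℝ => H q.1 q.2))
    -- H is uniformly convex in its second variable: H_pp ≥ θ for some θ > 0
    (hHconv : ∃ θ : ℝ, 0 < θ ∧ ∀ x p : ℝ, θ ≤ deriv (fun p' => deriv (fun p'' => H x p'') p') p)
    -- L is the (finite) Legendre transform of H: L(x,v) = sup_p [-p v - H(x,p)]
    (hL : ∀ x v : ℝ, IsLUB {z : ℝ | ∃ p : ℝ, z = -p * v - H x p} (L x v))
    -- ϖ is continuous on [0,T]
    (hϖ : ContinuousOn ϖ (Icc 0 T))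
    -- u is C¹
    (hu : ContDiff ℝ 1 (fun q : ℝ × ℝ => u q.1 q.2))
    -- Hamilton–Jacobi equation on [0,T] × ℝ
    (hHJ : ∀ t ∈ Icc (0 : ℝ) T, ∀ x : ℝ,
      -(deriv (fun s => u s x) t) + H x (ϖ t + deriv (fun y => u t y) x) = 0)
    -- terminal condition
    (huT : ∀ x : ℝ, u T x = uT x) :
    ∀ t ∈ Icc (0 : ℝ) T, ∀ x₀ : ℝ, ∀ γ γ' : ℝ → ℝ,
      (∀ s ∈ Icc t T, HasDerivAt γ (γ' s) s) →
      ContinuousOn γ' (Icc t T) →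
      γ t = x₀ →
      (∫ s in t..T, (L (γ s) (γ' s) + ϖ s * γ' s)) + uT (γ T) ≥ u t x₀ := by
  intro t ht x₀ γ γ' hγ hγ'c hγt
  obtain ⟨θ, hθ, hconv⟩ := hHconv
  have htT : t ≤ T := ht.2
  set U : ℝ × ℝ → ℝ := fun q => u q.1 q.2 with hUdef
  have hUd : Differentiable ℝ U := hu.differentiable one_ne_zero
  set DU := fderiv ℝ U with hDUdef
  have hDUc : Continuous DU := hu.continuous_fderiv one_ne_zero
  -- partial derivatives of u
  have hut : ∀ s x : ℝ, HasDerivAt (fun s' => u s' x) (DU (s, x) (1, 0)) s := by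
    intro s x
    exact ((hUd (s, x)).hasFDerivAt).comp_hasDerivAt s
      ((hasDerivAt_id s).prodMk (hasDerivAt_const s x))
  have hux : ∀ s x : ℝ, HasDerivAt (fun y => u s y) (DU (s, x) (0, 1)) x := by
    intro s x
    exact ((hUd (s, x)).hasFDerivAt).comp_hasDerivAt x
      ((hasDerivAt_const x s).prodMk (hasDerivAt_id x))
  -- the function along the trajectory
  set G : ℝ → ℝ := fun s => DU (s, γ s) (1, 0) + DU (s, γ s) (0, 1) * γ' s with hGdef
  have hγc : ContinuousOn γ (Icc t T) := fun s hs =>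
    (hγ s hs).continuousAt.continuousWithinAt
  have hg : ∀ s ∈ Icc t T, HasDerivAt (fun s' => u s' (γ s')) (G s) s := by
    intro s hs
    have h := ((hUd (s, γ s)).hasFDerivAt).comp_hasDerivAt s
      ((hasDerivAt_id s).prodMk (hγ s hs))
    have heq : DU (s, γ s) (1, γ' s) = G s := by
      have : ((1 : ℝ), γ' s) = ((1 : ℝ), (0 : ℝ)) + γ' s • ((0 : ℝ), (1 : ℝ)) := by
        simp [Prod.ext_iff]
      rw [hGdef]
      simp only [this, map_add, ContinuousLinearMap.map_smul, smul_eq_mul]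
      ring
    rwa [heq] at h
  -- HJ along the trajectory
  have hHJ' : ∀ s ∈ Icc t T, DU (s, γ s) (1, 0)
      = H (γ s) (ϖ s + DU (s, γ s) (0, 1)) := by
    intro s hs
    have hs0 : s ∈ Icc (0 : ℝ) T := ⟨le_trans ht.1 hs.1, hs.2⟩
    have := hHJ s hs0 (γ s)
    rw [(hut s (γ s)).deriv, (hux s (γ s)).deriv] at this
    linarith
  -- pointwise inequality
  have hpt : ∀ s ∈ Icc t T, -G s ≤ L (γ s) (γ' s) + ϖ s * γ' s := by
    intro s hs
    have hmem : -(ϖ s + DU (s, γ s) (0, 1)) * γ' s - H (γ s) (ϖ s + DU (s, γ s) (0, 1))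
        ≤ L (γ s) (γ' s) := (hL (γ s) (γ' s)).1 ⟨ϖ s + DU (s, γ s) (0, 1), rfl⟩
    have h1 := hHJ' s hs
    have hGs : G s = DU (s, γ s) (1, 0) + DU (s, γ s) (0, 1) * γ' s := rfl
    nlinarith [hmem, h1, hGs]
  -- continuity of G on Icc
  have hGc : ContinuousOn G (Icc t T) := by
    have hpath : ContinuousOn (fun s => (s, γ s)) (Icc t T) :=
      (continuous_id.continuousOn).prodMk hγc
    have h1 : ContinuousOn (fun s => DU (s, γ s)) (Icc t T) := hDUc.comp_continuousOn hpath
    exact (h1.clm_apply continuousOn_const).add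
      ((h1.clm_apply continuousOn_const).mul hγ'c)
  have hGint : IntervalIntegrable G volume t T := by
    apply ContinuousOn.intervalIntegrable
    rwa [uIcc_of_le htT]
  -- FTC
  have hFTC : (∫ s in t..T, G s) = u T (γ T) - u t (γ t) := by
    apply intervalIntegral.integral_eq_sub_of_hasDerivAt
    · intro s hs
      rw [uIcc_of_le htT] at hs
      exact hg s hs
    · exact hGint
  -- upper bound for L ∘ path : derivative of H in p
  set DH := fderiv ℝ (fun q : ℝ × ℝ => H q.1 q.2) with hDHdef
  have hHd : Differentiable ℝ (fun q : ℝ × ℝ => H q.1 q.2) :=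
    hH.differentiable (by norm_num)
  have hDHc : Continuous DH := hH.continuous_fderiv (by norm_num)
  have hHp : ∀ x p : ℝ, HasDerivAt (fun p' => H x p') (DH (x, p) (0, 1)) p := by
    intro x p
    exact ((hHd (x, p)).hasFDerivAt).comp_hasDerivAt p
      ((hasDerivAt_const p x).prodMk (hasDerivAt_id p))
  have hLup : ∀ x v : ℝ, L x v ≤ -H x 0 + (v + DH (x, 0) (0, 1)) ^ 2 / (2 * θ) := by
    intro x v
    have hf2 : ContDiff ℝ 2 (fun p => H x p) :=
      hH.comp (contDiff_const.prodMk contDiff_id)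
    have hquad := quad_lower_of_deriv2 (θ := θ) (fun p => H x p) hf2 (hconv x)
    have hd0 : deriv (fun p => H x p) 0 = DH (x, 0) (0, 1) := (hHp x 0).deriv
    refine (hL x v).2 ?_
    rintro z ⟨p, rfl⟩
    have hq : H x 0 + DH (x, 0) (0, 1) * p + θ / 2 * p ^ 2 ≤ H x p := by
      have := hquad p; rw [hd0] at this; exact this
    have h2θ : 0 < 2 * θ := by linarith
    have hw : (v + DH (x, 0) (0, 1)) ^ 2
        = (v + DH (x, 0) (0, 1)) ^ 2 / (2 * θ) * (2 * θ) :=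
      (div_mul_cancel₀ _ (ne_of_gt h2θ)).symm
    nlinarith [hq, hw, hθ, sq_nonneg (v + DH (x, 0) (0, 1) + θ * p)]
  have hLlow : ∀ x v : ℝ, -H x 0 ≤ L x v := by
    intro x v
    have : -(0 : ℝ) * v - H x 0 ≤ L x v := (hL x v).1 ⟨0, rfl⟩
    linarith
  -- integrability of the Lagrangian along the path
  set f : ℝ → ℝ := fun s => L (γ s) (γ' s) + ϖ s * γ' s with hfdef
  have hϖ' : ContinuousOn ϖ (Icc t T) := hϖ.mono (Icc_subset_Icc ht.1 le_rfl)
  -- measurability of f on Icc t T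
  have hLmeas : Measurable (fun q : ℝ × ℝ => L q.1 q.2) :=
    legendre_measurable H L hH.continuous hL
  have hpathc : ContinuousOn (fun s => (γ s, γ' s)) (Icc t T) := hγc.prodMk hγ'c
  have hfae : AEMeasurable f (volume.restrict (Icc t T)) := by
    have h1 : AEMeasurable (fun s => L (γ s) (γ' s)) (volume.restrict (Icc t T)) :=
      hLmeas.comp_aemeasurable (hpathc.aemeasurable measurableSet_Icc)
    have h2 : AEMeasurable (fun s => ϖ s * γ' s) (volume.restrict (Icc t T)) :=
      ((hϖ'.mul hγ'c).aemeasurable measurableSet_Icc)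
    exact h1.add h2
  -- bound for f on Icc t T
  have hbound : ∃ C : ℝ, ∀ s ∈ Icc t T, |f s| ≤ C := by
    -- upper bound function
    set φ : ℝ → ℝ := fun s =>
      -H (γ s) 0 + (γ' s + DH (γ s, 0) (0, 1)) ^ 2 / (2 * θ) + ϖ s * γ' s with hφdef
    have hφc : ContinuousOn φ (Icc t T) := by
      have hH0 : ContinuousOn (fun s => H (γ s) 0) (Icc t T) :=
        hH.continuous.comp_continuousOn (hγc.prodMk continuousOn_const)
      have hDH0 : ContinuousOn (fun s => DH (γ s, 0) (0, 1)) (Icc t T) :=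
        ((hDHc.comp_continuousOn (hγc.prodMk continuousOn_const)).clm_apply continuousOn_const)
      exact ((hH0.neg.add (((hγ'c.add hDH0).pow 2).div_const _))).add (hϖ'.mul hγ'c)
    obtain ⟨C₁, hC₁⟩ := (isCompact_Icc).exists_bound_of_continuousOn hφc
    obtain ⟨C₂, hC₂⟩ := (isCompact_Icc).exists_bound_of_continuousOn hGc
    refine ⟨max C₁ C₂, fun s hs => abs_le.2 ⟨?_, ?_⟩⟩
    · have h1 := hpt s hs
      have h2 : |G s| ≤ C₂ := by simpa using hC₂ s hs
      have : -G s ≤ f s := h1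
      have h3 : -C₂ ≤ -G s := by
        have := abs_le.1 h2; linarith [this.2]
      linarith [le_max_right C₁ C₂]
    · have h1 : L (γ s) (γ' s) ≤ -H (γ s) 0 + (γ' s + DH (γ s, 0) (0, 1)) ^ 2 / (2 * θ) :=
        hLup (γ s) (γ' s)
      have h2 : f s ≤ φ s := by rw [hfdef, hφdef]; simp only; linarith
      have h3 : |φ s| ≤ C₁ := by simpa using hC₁ s hs
      have := abs_le.1 h3
      linarith [le_max_left C₁ C₂, this.2]
  obtain ⟨C, hC⟩ := hbound
  have hfint : IntervalIntegrable f volume t T := by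
    rw [intervalIntegrable_iff]
    have hsub : Set.uIoc t T ⊆ Icc t T := by
      rw [uIoc_of_le htT]; exact Ioc_subset_Icc_self
    have hIcc : IntegrableOn f (Icc t T) volume :=
      MeasureTheory.Integrable.mono' (g := fun _ => C)
        (integrableOn_const measure_Icc_lt_top.ne) hfae.aestronglyMeasurable
        ((ae_restrict_iff' measurableSet_Icc).2 (ae_of_all _ fun s hs => hC s hs))
    exact hIcc.mono_set hsub
  -- now the comparison
  have hneg : IntervalIntegrable (fun s => -G s) volume t T := hGint.neg
  have hmono : (∫ s in t..T, -G s) ≤ ∫ s in t..T, f s :=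
    intervalIntegral.integral_mono_on htT hneg hfint hpt
  have hnegval : (∫ s in t..T, -G s) = u t (γ t) - u T (γ T) := by
    rw [intervalIntegral.integral_neg, hFTC]; ring
  rw [hnegval] at hmono
  have : (∫ s in t..T, f s) = ∫ s in t..T, (L (γ s) (γ' s) + ϖ s * γ' s) := rfl
  rw [this] at hmono
  rw [ge_iff_le, ← hγt] at *
  have hTv : u T (γ T) = uT (γ T) := huT (γ T)
  linarith
end

section
/- Let T > 0, let H : ℝ × ℝ → ℝ be C² and uniformly convex in its second variable, let L be the Legendre transform of H, let ϖ : [0,T] → ℝ be continuous, and let u ∈ C¹([0,T] × ℝ) satisfy the Hamilton–Jacobi equation -u_t(t,x) + H(x, ϖ(t) + u_x(t,x)) = 0 on [0,T] × ℝ with u(T,x) = u_T(x). If a C¹ trajectory x : [t,T] → ℝ with x(t) = x₀ satisfies the feedback ODE ẋ(s) = -H_p(x(s), ϖ(s) + u_x(s, x(s))) for all s ∈ [t,T], then ∫_t^T [ L(x(s), ẋ(s)) + ϖ(s) ẋ(s) ] ds + u_T(x(T)) = u(t, x₀); that is, the feedback control v* = -H_p(x, ϖ + u_x) is optimal and u is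 the value function. -/
open Real Set MeasureTheory intervalIntegral

/-- Tangent line inequality for a function with monotone derivative. -/
lemma tangent_le {f : ℝ → ℝ} (hfd : Differentiable ℝ f)
    (hmono : Monotone (deriv f)) (q p : ℝ) :
    f q + deriv f q * (p - q) ≤ f p := by
  rcases lt_trichotomy p q with h | h | h
  · obtain ⟨c, hc, hc'⟩ := exists_hasDerivAt_eq_slope f (deriv f) h
      hfd.continuous.continuousOn (fun x _ => (hfd x).hasDerivAt)
    rw [eq_div_iff (by linarith : q - p ≠ 0)] at hc'
    have h1 : f q - f p = deriv f c * (q - p) := hc'.symm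
    have h2 : deriv f c ≤ deriv f q := hmono hc.2.le
    nlinarith [sub_pos.2 h]
  · simp [h]
  · obtain ⟨c, hc, hc'⟩ := exists_hasDerivAt_eq_slope f (deriv f) h
      hfd.continuous.continuousOn (fun x _ => (hfd x).hasDerivAt)
    rw [eq_div_iff (by linarith : p - q ≠ 0)] at hc'
    have h1 : f p - f q = deriv f c * (p - q) := hc'.symm
    have h2 : deriv f q ≤ deriv f c := hmono hc.1.le
    nlinarith [sub_pos.2 h]

/-- Hamilton–Jacobi verification theorem, optimality of the feedback control.
If `u` is a `C¹` solution of `-u_t + H(x, ϖ(t) + u_x) = 0` with `u(T,·) = uT`, where `H` is `C²`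
and uniformly convex in its second variable and `L` is the Legendre transform of `H`,
and a `C¹` trajectory follows the feedback ODE `ẋ(s) = -H_p(x(s), ϖ(s) + u_x(s, x(s)))`,
then `∫_t^T [L(x(s), ẋ(s)) + ϖ(s) ẋ(s)] ds + uT(x(T)) = u(t, x₀)`:
the feedback control is optimal and `u` is the value function. -/
theorem hj_verification_optimality
    (T : ℝ) (hT : 0 < T)
    (H : ℝ → ℝ → ℝ) (L : ℝ → ℝ → ℝ) (ϖ : ℝ → ℝ) (u : ℝ → ℝ → ℝ) (uT : ℝ → ℝ)
    -- H is C²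
    (hH : ContDiff ℝ 2 (fun q : ℝ × ℝ => H q.1 q.2))
    -- H is uniformly convex in its second variable: H_pp ≥ θ for some θ > 0
    (hHconv : ∃ θ : ℝ, 0 < θ ∧ ∀ x p : ℝ, θ ≤ deriv (fun p' => deriv (fun p'' => H x p'') p') p)
    -- L is the (finite) Legendre transform of H: L(x,v) = sup_p [-p v - H(x,p)]
    (hL : ∀ x v : ℝ, IsLUB {z : ℝ | ∃ p : ℝ, z = -p * v - H x p} (L x v))
    -- ϖ is continuous on [0,T]
    (hϖ : ContinuousOn ϖ (Icc 0 T))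
    -- u is C¹
    (hu : ContDiff ℝ 1 (fun q : ℝ × ℝ => u q.1 q.2))
    -- Hamilton–Jacobi equation on [0,T] × ℝ
    (hHJ : ∀ t ∈ Icc (0 : ℝ) T, ∀ x : ℝ,
      -(deriv (fun s => u s x) t) + H x (ϖ t + deriv (fun y => u t y) x) = 0)
    -- terminal condition
    (huT : ∀ x : ℝ, u T x = uT x) :
    ∀ t ∈ Icc (0 : ℝ) T, ∀ x₀ : ℝ, ∀ γ γ' : ℝ → ℝ,
      (∀ s ∈ Icc t T, HasDerivAt γ (γ' s) s) →
      ContinuousOn γ' (Icc t T) →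
      γ t = x₀ →
      -- the feedback ODE: ẋ(s) = -H_p(x(s), ϖ(s) + u_x(s, x(s)))
      (∀ s ∈ Icc t T,
        γ' s = -(deriv (fun p => H (γ s) p) (ϖ s + deriv (fun y => u s y) (γ s)))) →
      (∫ s in t..T, (L (γ s) (γ' s) + ϖ s * γ' s)) + uT (γ T) = u t x₀ := by
  obtain ⟨θ, hθpos, hθ⟩ := hHconv
  -- Legendre transform evaluated at v = -H_p(x,q) is attained at p = q
  have hLeg : ∀ x q : ℝ,
      L x (-(deriv (fun p => H x p) q)) = -q * (-(deriv (fun p => H x p) q)) - H x q := by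
    intro x q
    set f : ℝ → ℝ := fun p => H x p with hf
    have hfC2 : ContDiff ℝ 2 f := by
      have : ContDiff ℝ 2 (fun p : ℝ => ((x, p) : ℝ × ℝ)) := contDiff_const.prodMk contDiff_id
      exact hH.comp this
    have hfC2' : ContDiff ℝ (1 + 1) f := by exact_mod_cast hfC2
    have h2 := contDiff_succ_iff_deriv.mp hfC2'
    have hfd : Differentiable ℝ f := h2.1
    have hfd' : Differentiable ℝ (deriv f) := h2.2.2.differentiable one_ne_zero
    have hmono : Monotone (deriv f) := by
      apply monotone_of_deriv_nonneg hfd'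
      intro p
      exact le_trans hθpos.le (hθ x p)
    set v : ℝ := -(deriv f q) with hv
    refine le_antisymm ((hL x v).2 ?_) ((hL x v).1 ⟨q, rfl⟩)
    rintro z ⟨p, rfl⟩
    have htan := tangent_le hfd hmono q p
    have hfp : f p = H x p := rfl
    have hfq : f q = H x q := rfl
    rw [hfp, hfq] at htan
    rw [hv]
    nlinarith [htan]
  intro t ht x₀ γ γ' hγ hγc hγ0 hode
  have htT : t ≤ T := ht.2
  set U : ℝ × ℝ → ℝ := fun q => u q.1 q.2 with hU
  have hudiff : Differentiable ℝ U := hu.differentiable one_ne_zero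
  set ut : ℝ → ℝ → ℝ := fun a b => fderiv ℝ U (a, b) (1, 0) with hut
  set ux : ℝ → ℝ → ℝ := fun a b => fderiv ℝ U (a, b) (0, 1) with hux
  have hpart1 : ∀ a b : ℝ, HasDerivAt (fun s => u s b) (ut a b) a := by
    intro a b
    have h1 : HasDerivAt (fun s : ℝ => ((s, b) : ℝ × ℝ)) (((1 : ℝ), (0 : ℝ))) a :=
      (hasDerivAt_id a).prodMk (hasDerivAt_const a b)
    exact (hudiff (a, b)).hasFDerivAt.comp_hasDerivAt a h1
  have hpart2 : ∀ a b : ℝ, HasDerivAt (fun y => u a y) (ux a b) b := by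
    intro a b
    have h1 : HasDerivAt (fun y : ℝ => ((a, y) : ℝ × ℝ)) (((0 : ℝ), (1 : ℝ))) b :=
      (hasDerivAt_const b a).prodMk (hasDerivAt_id b)
    exact (hudiff (a, b)).hasFDerivAt.comp_hasDerivAt b h1
  -- derivative of s ↦ u s (γ s)
  have hφ : ∀ s ∈ Icc t T,
      HasDerivAt (fun s => u s (γ s)) (ut s (γ s) + γ' s * ux s (γ s)) s := by
    intro s hs
    have h1 : HasDerivAt (fun s : ℝ => ((s, γ s) : ℝ × ℝ)) (((1 : ℝ), γ' s)) s :=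
      (hasDerivAt_id s).prodMk (hγ s hs)
    have h2 := (hudiff (s, γ s)).hasFDerivAt.comp_hasDerivAt s h1
    have h3 : fderiv ℝ U (s, γ s) ((1 : ℝ), γ' s)
        = ut s (γ s) + γ' s * ux s (γ s) := by
      have : ((1 : ℝ), γ' s) = ((1 : ℝ), (0 : ℝ)) + γ' s • ((0 : ℝ), (1 : ℝ)) := by
        simp [Prod.ext_iff]
      rw [this, map_add, (fderiv ℝ U (s, γ s)).map_smul]
      simp [ut, ux, smul_eq_mul]
    rwa [h3] at h2
  -- the integrand equals the negative of that derivative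
  have hEq : ∀ s ∈ Icc t T,
      L (γ s) (γ' s) + ϖ s * γ' s = -(ut s (γ s) + γ' s * ux s (γ s)) := by
    intro s hs
    have hs0 : s ∈ Icc (0 : ℝ) T := ⟨le_trans ht.1 hs.1, hs.2⟩
    have hHJs := hHJ s hs0 (γ s)
    rw [(hpart1 s (γ s)).deriv, (hpart2 s (γ s)).deriv] at hHJs
    have hodes := hode s hs
    rw [(hpart2 s (γ s)).deriv] at hodes
    have hLs := hLeg (γ s) (ϖ s + ux s (γ s))
    rw [← hodes] at hLs
    rw [hLs]
    have hH' : H (γ s) (ϖ s + ux s (γ s)) = ut s (γ s) := by linarith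
    rw [hH']
    ring
  -- continuity of the derivative on [t,T]
  have hγcont : ContinuousOn γ (Icc t T) := fun s hs =>
    (hγ s hs).continuousAt.continuousWithinAt
  have hpair : ContinuousOn (fun s => ((s, γ s) : ℝ × ℝ)) (Icc t T) :=
    continuousOn_id.prodMk hγcont
  have hfderiv_cont : Continuous (fderiv ℝ U) :=
    (hu.fderiv_right (m := 0) (by norm_num)).continuous
  have hψcont : ContinuousOn (fun s => ut s (γ s) + γ' s * ux s (γ s)) (Icc t T) := by
    have h1 : ContinuousOn (fun s => fderiv ℝ U (s, γ s)) (Icc t T) :=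
      hfderiv_cont.comp_continuousOn hpair
    have h2 : ContinuousOn (fun s => ut s (γ s)) (Icc t T) :=
      (ContinuousLinearMap.apply ℝ ℝ (((1 : ℝ), (0 : ℝ)))).continuous.comp_continuousOn h1
    have h3 : ContinuousOn (fun s => ux s (γ s)) (Icc t T) :=
      (ContinuousLinearMap.apply ℝ ℝ (((0 : ℝ), (1 : ℝ)))).continuous.comp_continuousOn h1
    exact h2.add (hγc.mul h3)
  -- fundamental theorem of calculus
  have hInt : IntervalIntegrable (fun s => ut s (γ s) + γ' s * ux s (γ s))
      MeasureTheory.volume t T := by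
    apply ContinuousOn.intervalIntegrable
    rwa [uIcc_of_le htT]
  have hFTC : ∫ s in t..T, (ut s (γ s) + γ' s * ux s (γ s))
      = u T (γ T) - u t (γ t) := by
    apply intervalIntegral.integral_eq_sub_of_hasDerivAt
    · intro s hs
      rw [uIcc_of_le htT] at hs
      exact hφ s hs
    · exact hInt
  have hcongr : ∫ s in t..T, (L (γ s) (γ' s) + ϖ s * γ' s)
      = ∫ s in t..T, -(ut s (γ s) + γ' s * ux s (γ s)) := by
    apply intervalIntegral.integral_congr
    intro s hs
    rw [uIcc_of_le htT] at hs
    exact hEq s hs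
  rw [hcongr, intervalIntegral.integral_neg, hFTC, hγ0, ← huT (γ T)]
  ring
end

section
/- Let T > 0, let L : ℝ × ℝ → ℝ be C² and uniformly convex in its second variable, let H(x,p) = sup_{v ∈ ℝ} [ -p v - L(x,v) ] be finite and C¹, let Q : [0,T] → ℝ be continuous, let u_T be C¹, and let ϖ ∈ C¹([0,T]). Suppose φ ∈ C²([0,T] × ℝ) satisfies: φ_x > 0; φ_x(t,·) is a probability density for every t; the Euler–Lagrange equation ∂_x[ H(x, -L_v(x, -φ_t/φ_x)) ] + ∂_t[ L_v(x, -φ_t/φ_x) + ϖ(t) ] = 0 on (0,T) × ℝ; the terminal condition -L_v(x, -φ_t(T,x)/φ_x(T,x)) - ϖ(T) = u_T'(x); and the balance constraint ∫_ℝ ( φ_t + Q φ_x ) dx = 0 for all t. Define m = φ_x and u(t,x) = u_T(x) - ∫_t^T H( x, -L_v( x, -φ_t(s,x)/φ_x(s,x) ) ) ds. Then (u, m, ϖ) solves the MFG price system: -u_t + H(x, ϖ(t) + u_x) = 0, m_t - (H_p(x, ϖ(t) + u_x) m)_x = 0, -∫_ℝ H_p(x, ϖ(t) + u_x) m dx =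 Q(t) for all t, with u(T,·) = u_T. -/
open Real Set MeasureTheory intervalIntegral

lemma hasDerivAt_fst_slice {f : ℝ × ℝ → ℝ} {a b : ℝ} (hf : DifferentiableAt ℝ f (a, b)) :
    HasDerivAt (fun s => f (s, b)) (fderiv ℝ f (a, b) (1, 0)) a :=
  hf.hasFDerivAt.comp_hasDerivAt a ((hasDerivAt_id a).prodMk (hasDerivAt_const a b))

lemma hasDerivAt_snd_slice {f : ℝ × ℝ → ℝ} {a b : ℝ} (hf : DifferentiableAt ℝ f (a, b)) :
    HasDerivAt (fun y => f (a, y)) (fderiv ℝ f (a, b) (0, 1)) b :=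
  hf.hasFDerivAt.comp_hasDerivAt b ((hasDerivAt_const b a).prodMk (hasDerivAt_id b))

lemma legendre_duality (L H : ℝ → ℝ → ℝ)
    (hLreg : ContDiff ℝ 2 (fun q : ℝ × ℝ => L q.1 q.2))
    (hLconv : ∃ θ : ℝ, 0 < θ ∧ ∀ x v : ℝ, θ ≤ deriv (fun v' => deriv (fun v'' => L x v'') v') v)
    (hH : ∀ x p : ℝ, IsLUB {z : ℝ | ∃ v : ℝ, z = -p * v - L x v} (H x p))
    (hHreg : ContDiff ℝ 1 (fun q : ℝ × ℝ => H q.1 q.2)) (x v : ℝ) :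
    H x (-(deriv (fun v' => L x v') v)) = -(-(deriv (fun v' => L x v') v)) * v - L x v ∧
    deriv (fun p => H x p) (-(deriv (fun v' => L x v') v)) = -v := by
  obtain ⟨θ, hθ, hconv⟩ := hLconv
  set Lx : ℝ → ℝ := fun v' => L x v' with hLx
  have hLxC : ContDiff ℝ 2 Lx := hLreg.comp ((contDiff_const).prodMk contDiff_id)
  have hLxd : Differentiable ℝ Lx := hLxC.differentiable (by norm_num)
  set Lv : ℝ → ℝ := deriv Lx with hLvdef
  have hLvmono : StrictMono Lv := by
    apply strictMono_of_deriv_pos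
    intro w
    exact lt_of_lt_of_le hθ (hconv x w)
  set p : ℝ := -(Lv v) with hp
  set g : ℝ → ℝ := fun w => -p * w - L x w with hg
  have hgd : ∀ w, HasDerivAt g (Lv v - Lv w) w := by
    intro w
    have h1 : HasDerivAt (fun w' : ℝ => -p * w') (-p) w := by
      simpa using (hasDerivAt_id w).const_mul (-p)
    have h3 := h1.sub (hLxd w).hasDerivAt
    have he : -p - Lv w = Lv v - Lv w := by rw [hp]; ring
    rw [he] at h3
    exact h3
  have hgc : Continuous g := by
    have hc : Continuous Lx := hLxC.continuous
    exact (continuous_const.mul continuous_id).sub hc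
  have hgmax : ∀ w, g w ≤ g v := by
    intro w
    rcases lt_trichotomy w v with h | h | h
    · have hmono : StrictMonoOn g (Iic v) := by
        apply strictMonoOn_of_deriv_pos (convex_Iic v) hgc.continuousOn
        intro z hz
        rw [interior_Iic] at hz
        rw [(hgd z).deriv]
        have := hLvmono hz
        linarith
      exact (hmono (mem_Iic.2 h.le) (mem_Iic.2 le_rfl) h).le
    · rw [h]
    · have hanti : StrictAntiOn g (Ici v) := by
        apply strictAntiOn_of_deriv_neg (convex_Ici v) hgc.continuousOn
        intro z hz
        rw [interior_Ici] at hz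
        rw [(hgd z).deriv]
        have := hLvmono hz
        linarith
      exact (hanti (mem_Ici.2 le_rfl) (mem_Ici.2 h.le) h).le
  have hval : H x p = g v := by
    have : IsLUB {z : ℝ | ∃ w : ℝ, z = -p * w - L x w} (g v) := by
      constructor
      · rintro z ⟨w, rfl⟩; exact hgmax w
      · intro b hb; exact hb ⟨v, rfl⟩
    exact (hH x p).unique this
  have hval' : H x p = -p * v - L x v := hval
  constructor
  · exact hval'
  · have hHd : HasDerivAt (fun p' => H x p')
        (fderiv ℝ (fun q : ℝ × ℝ => H q.1 q.2) (x, p) (0, 1)) p :=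
      hasDerivAt_snd_slice (hHreg.differentiable one_ne_zero (x, p))
    have hmin : IsLocalMin (fun p' => H x p' + p' * v + L x v) p := by
      refine Filter.Eventually.of_forall fun p' => ?_
      have h1 : -p' * v - L x v ≤ H x p' := (hH x p').1 ⟨v, rfl⟩
      show H x p + p * v + L x v ≤ H x p' + p' * v + L x v
      nlinarith
    have hhd : HasDerivAt (fun p' => H x p' + p' * v + L x v)
        (fderiv ℝ (fun q : ℝ × ℝ => H q.1 q.2) (x, p) (0, 1) + v) p := by
      have h1 : HasDerivAt (fun p' : ℝ => p' * v) v p := by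
        simpa using (hasDerivAt_id p).mul_const v
      exact (hHd.add h1).add_const (L x v)
    have hz := hmin.hasDerivAt_eq_zero hhd
    show deriv (fun p' => H x p') p = -v
    rw [hHd.deriv]
    linarith

noncomputable def pd1 (f : ℝ → ℝ → ℝ) (q : ℝ × ℝ) : ℝ :=
  fderiv ℝ (fun q : ℝ × ℝ => f q.1 q.2) q (1, 0)

noncomputable def pd2 (f : ℝ → ℝ → ℝ) (q : ℝ × ℝ) : ℝ :=
  fderiv ℝ (fun q : ℝ × ℝ => f q.1 q.2) q (0, 1)

lemma pd1_hasDerivAt {f : ℝ → ℝ → ℝ} {t x : ℝ}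
    (hf : DifferentiableAt ℝ (fun q : ℝ × ℝ => f q.1 q.2) (t, x)) :
    HasDerivAt (fun s => f s x) (pd1 f (t, x)) t := hasDerivAt_fst_slice hf

lemma pd2_hasDerivAt {f : ℝ → ℝ → ℝ} {t x : ℝ}
    (hf : DifferentiableAt ℝ (fun q : ℝ × ℝ => f q.1 q.2) (t, x)) :
    HasDerivAt (fun y => f t y) (pd2 f (t, x)) x := hasDerivAt_snd_slice hf

lemma pd1_contDiff {f : ℝ → ℝ → ℝ} (hf : ContDiff ℝ 2 (fun q : ℝ × ℝ => f q.1 q.2)) :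
    ContDiff ℝ 1 (pd1 f) := (hf.fderiv_right (by norm_num)).clm_apply contDiff_const

lemma pd2_contDiff {f : ℝ → ℝ → ℝ} (hf : ContDiff ℝ 2 (fun q : ℝ × ℝ => f q.1 q.2)) :
    ContDiff ℝ 1 (pd2 f) := (hf.fderiv_right (by norm_num)).clm_apply contDiff_const

lemma clairaut {f : ℝ → ℝ → ℝ} (hf : ContDiff ℝ 2 (fun q : ℝ × ℝ => f q.1 q.2)) (t x : ℝ) :
    deriv (fun y => pd1 f (t, y)) x = deriv (fun s => pd2 f (s, x)) t := by
  have hD : DifferentiableAt ℝ (fderiv ℝ (fun q : ℝ × ℝ => f q.1 q.2)) (t, x) :=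
    ((hf.fderiv_right (m := 1) (le_refl _)).differentiable one_ne_zero) (t, x)
  have h1 : HasFDerivAt (pd1 f)
      ((ContinuousLinearMap.apply ℝ ℝ (((1:ℝ),(0:ℝ)))).comp
        (fderiv ℝ (fderiv ℝ (fun q : ℝ × ℝ => f q.1 q.2)) (t, x))) (t, x) :=
    (ContinuousLinearMap.apply ℝ ℝ (((1:ℝ),(0:ℝ)))).hasFDerivAt.comp (t, x) hD.hasFDerivAt
  have h2 : HasFDerivAt (pd2 f)
      ((ContinuousLinearMap.apply ℝ ℝ (((0:ℝ),(1:ℝ)))).comp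
        (fderiv ℝ (fderiv ℝ (fun q : ℝ × ℝ => f q.1 q.2)) (t, x))) (t, x) :=
    (ContinuousLinearMap.apply ℝ ℝ (((0:ℝ),(1:ℝ)))).hasFDerivAt.comp (t, x) hD.hasFDerivAt
  have e1 : HasDerivAt (fun y => pd1 f (t, y))
      (fderiv ℝ (fderiv ℝ (fun q : ℝ × ℝ => f q.1 q.2)) (t, x) (0, 1) (1, 0)) x :=
    h1.differentiableAt.hasFDerivAt.comp_hasDerivAt x
        ((hasDerivAt_const x t).prodMk (hasDerivAt_id x)) |>.congr_deriv (by
      rw [h1.fderiv]; rfl)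
  have e2 : HasDerivAt (fun s => pd2 f (s, x))
      (fderiv ℝ (fderiv ℝ (fun q : ℝ × ℝ => f q.1 q.2)) (t, x) (1, 0) (0, 1)) t :=
    by
      have h := h2.differentiableAt.hasFDerivAt.comp_hasDerivAt t
        ((hasDerivAt_id t).prodMk (hasDerivAt_const t x))
      rw [h2.fderiv] at h
      exact h
  rw [e1.deriv, e2.deriv]
  exact (hf.contDiffAt.isSymmSndFDerivAt (by norm_num)) _ _

noncomputable def Vfun (φ : ℝ → ℝ → ℝ) (q : ℝ × ℝ) : ℝ := -(pd1 φ q / pd2 φ q)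

noncomputable def LVfun (L φ : ℝ → ℝ → ℝ) (q : ℝ × ℝ) : ℝ := pd2 L (q.2, Vfun φ q)

noncomputable def G2fun (L H φ : ℝ → ℝ → ℝ) (q : ℝ × ℝ) : ℝ := H q.2 (-(LVfun L φ q))


/-- from a solution of the potential (variational) formulation back to the
MFG price system.  Given `φ` with `φ_x > 0`, `φ_x(t,·)` a probability density, satisfying
the Euler–Lagrange equation, the terminal condition and the balance constraint, setting
`m = φ_x` and `u(t,x) = uT(x) - ∫_t^T H(x, -L_v(x, -φ_t(s,x)/φ_x(s,x))) ds`,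
the triple `(u, m, ϖ)` solves the MFG price system. -/
theorem potential_to_mfg
    (T : ℝ) (hT : 0 < T)
    (L H : ℝ → ℝ → ℝ) (Q ϖ : ℝ → ℝ) (uT : ℝ → ℝ) (φ : ℝ → ℝ → ℝ)
    -- L is C² and uniformly convex in its second variable
    (hLreg : ContDiff ℝ 2 (fun q : ℝ × ℝ => L q.1 q.2))
    (hLconv : ∃ θ : ℝ, 0 < θ ∧ ∀ x v : ℝ, θ ≤ deriv (fun v' => deriv (fun v'' => L x v'') v') v)
    -- H(x,p) = sup_v [-p v - L(x,v)] is finite and C¹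
    (hH : ∀ x p : ℝ, IsLUB {z : ℝ | ∃ v : ℝ, z = -p * v - L x v} (H x p))
    (hHreg : ContDiff ℝ 1 (fun q : ℝ × ℝ => H q.1 q.2))
    -- data regularity
    (hQ : ContinuousOn Q (Icc 0 T))
    (huT : ContDiff ℝ 1 uT)
    (hϖ : ContDiffOn ℝ 1 ϖ (Icc 0 T))
    -- φ is C² with φ_x > 0 and φ_x(t,·) a probability density for every t
    (hφ : ContDiff ℝ 2 (fun q : ℝ × ℝ => φ q.1 q.2))
    (hφxpos : ∀ t ∈ Icc (0 : ℝ) T, ∀ x : ℝ, 0 < deriv (fun y => φ t y) x)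
    (hφxint : ∀ t ∈ Icc (0 : ℝ) T, Integrable (fun x => deriv (fun y => φ t y) x))
    (hφxprob : ∀ t ∈ Icc (0 : ℝ) T, (∫ x : ℝ, deriv (fun y => φ t y) x) = 1)
    (hφtint : ∀ t ∈ Icc (0 : ℝ) T, Integrable (fun x => deriv (fun s => φ s x) t))
    -- the Euler–Lagrange equation on (0,T) × ℝ
    (hEL : ∀ t ∈ Ioo (0 : ℝ) T, ∀ x : ℝ,
      deriv (fun y => H y
          (-(deriv (fun v => L y v)
            (-(deriv (fun s => φ s y) t / deriv (fun y' => φ t y') y))))) x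
      + deriv (fun s =>
          deriv (fun v => L x v)
            (-(deriv (fun s' => φ s' x) s / deriv (fun y => φ s y) x)) + ϖ s) t = 0)
    -- the terminal condition
    (hterm : ∀ x : ℝ,
      -(deriv (fun v => L x v)
          (-(deriv (fun s => φ s x) T / deriv (fun y => φ T y) x))) - ϖ T
        = deriv uT x)
    -- the balance constraint
    (hbal : ∀ t ∈ Icc (0 : ℝ) T,
      (∫ x : ℝ, (deriv (fun s => φ s x) t + Q t * deriv (fun y => φ t y) x)) = 0) :
    ∀ m u : ℝ → ℝ → ℝ,
      -- m = φ_x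
      (∀ t x : ℝ, m t x = deriv (fun y => φ t y) x) →
      -- u(t,x) = uT(x) - ∫_t^T H(x, -L_v(x, -φ_t(s,x)/φ_x(s,x))) ds
      (∀ t x : ℝ, u t x = uT x - ∫ s in t..T,
        H x (-(deriv (fun v => L x v)
          (-(deriv (fun s' => φ s' x) s / deriv (fun y => φ s y) x))))) →
      -- then (u, m, ϖ) solves the MFG price system:
      -- the Hamilton–Jacobi equation
      ((∀ t ∈ Icc (0 : ℝ) T, ∀ x : ℝ,
        -(deriv (fun s => u s x) t) + H x (ϖ t + deriv (fun y => u t y) x) = 0) ∧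
      -- the transport equation
      (∀ t ∈ Icc (0 : ℝ) T, ∀ x : ℝ,
        deriv (fun s => m s x) t -
          deriv (fun y => deriv (fun p => H y p)
            (ϖ t + deriv (fun y' => u t y') y) * m t y) x = 0) ∧
      -- the balance condition
      (∀ t ∈ Icc (0 : ℝ) T,
        -(∫ x : ℝ, deriv (fun p => H x p) (ϖ t + deriv (fun y => u t y) x) * m t x) = Q t) ∧
      -- terminal condition
      (∀ x : ℝ, u T x = uT x)) := by
  intro m u hm hu
  -- conversion of all partial derivatives to pd form
  have hφd : Differentiable ℝ (fun q : ℝ × ℝ => φ q.1 q.2) := hφ.differentiable (by norm_num)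
  have hLd : Differentiable ℝ (fun q : ℝ × ℝ => L q.1 q.2) := hLreg.differentiable (by norm_num)
  have hpdt : ∀ t x : ℝ, deriv (fun s => φ s x) t = pd1 φ (t, x) :=
    fun t x => (pd1_hasDerivAt (hφd _)).deriv
  have hpdx : ∀ t x : ℝ, deriv (fun y => φ t y) x = pd2 φ (t, x) :=
    fun t x => (pd2_hasDerivAt (hφd _)).deriv
  have hpLv : ∀ x v : ℝ, deriv (fun v' => L x v') v = pd2 L (x, v) :=
    fun x v => (pd2_hasDerivAt (hLd _)).deriv
  have hG2eq : ∀ s x : ℝ, G2fun L H φ (s, x)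
      = H x (-(pd2 L (x, -(pd1 φ (s, x) / pd2 φ (s, x))))) := fun _ _ => rfl
  have hLVeq : ∀ s x : ℝ, LVfun L φ (s, x)
      = pd2 L (x, -(pd1 φ (s, x) / pd2 φ (s, x))) := fun _ _ => rfl
  simp only [hpdt, hpdx, hpLv] at hEL hterm hbal hφxpos hφxint hφxprob hφtint hu hm
  simp only [← hG2eq] at hEL hu
  simp only [← hLVeq] at hEL hterm
  have checkEL : ∀ t ∈ Ioo (0:ℝ) T, ∀ x : ℝ,
      deriv (fun y => G2fun L H φ (t, y)) x
        + deriv (fun s => LVfun L φ (s, x) + ϖ s) t = 0 := hEL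
  have checkterm : ∀ x : ℝ, -(LVfun L φ (T, x)) - ϖ T = deriv uT x := hterm
  have checkbal : ∀ t ∈ Icc (0:ℝ) T, (∫ x : ℝ, (pd1 φ (t,x) + Q t * pd2 φ (t,x))) = 0 := hbal
  have checkpos : ∀ t ∈ Icc (0:ℝ) T, ∀ x : ℝ, 0 < pd2 φ (t, x) := hφxpos
  clear checkEL checkterm checkbal checkpos
  -- the open set where pd2 φ ≠ 0
  set U : Set (ℝ × ℝ) := {q : ℝ × ℝ | pd2 φ q ≠ 0} with hUdef
  have hUopen : IsOpen U := isOpen_compl_singleton.preimage (pd2_contDiff hφ).continuous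
  have hUmem : ∀ t ∈ Icc (0:ℝ) T, ∀ x : ℝ, (t, x) ∈ U :=
    fun t ht x => ne_of_gt (hφxpos t ht x)
  -- regularity of the composite functions on U
  have hVC : ContDiffOn ℝ 1 (Vfun φ) U :=
    (((pd1_contDiff hφ).contDiffOn.div (pd2_contDiff hφ).contDiffOn (fun q hq => hq)).neg)
  have hLVC : ContDiffOn ℝ 1 (LVfun L φ) U :=
    (pd2_contDiff hLreg).comp_contDiffOn (contDiff_snd.contDiffOn.prodMk hVC)
  have hG2c : ContDiffOn ℝ 1 (G2fun L H φ) U :=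
    hHreg.comp_contDiffOn (contDiff_snd.contDiffOn.prodMk hLVC.neg)
  have hG2diff : ∀ q ∈ U, DifferentiableAt ℝ (G2fun L H φ) q :=
    fun q hq => (hG2c.differentiableOn one_ne_zero).differentiableAt (hUopen.mem_nhds hq)
  have hLVdiff : ∀ q ∈ U, DifferentiableAt ℝ (LVfun L φ) q :=
    fun q hq => (hLVC.differentiableOn one_ne_zero).differentiableAt (hUopen.mem_nhds hq)
  have hGycont : ContinuousOn (fun q => fderiv ℝ (G2fun L H φ) q ((0:ℝ), (1:ℝ))) U :=
    (hG2c.continuousOn_fderiv_of_isOpen hUopen le_rfl).clm_apply continuousOn_const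
  -- slices
  have hslmap : ∀ x : ℝ, ContinuousOn (fun s => G2fun L H φ (s, x)) {s : ℝ | (s, x) ∈ U} :=
    fun x => hG2c.continuousOn.comp
      ((continuous_id.prodMk continuous_const).continuousOn) (fun s hs => hs)
  have hslopen : ∀ x : ℝ, IsOpen {s : ℝ | (s, x) ∈ U} :=
    fun x => hUopen.preimage (continuous_id.prodMk continuous_const)
  have hslIcc : ∀ x : ℝ, Icc (0:ℝ) T ⊆ {s : ℝ | (s, x) ∈ U} :=
    fun x s hs => hUmem s hs x
  -- interval integrability of the slice of G2fun
  have hint : ∀ t ∈ Icc (0:ℝ) T, ∀ x : ℝ,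
      IntervalIntegrable (fun s => G2fun L H φ (s, x)) volume t T := by
    intro t ht x
    apply ContinuousOn.intervalIntegrable
    apply (hslmap x).mono
    rw [uIcc_of_le ht.2]
    exact (Icc_subset_Icc ht.1 le_rfl).trans (hslIcc x)
  -- time derivative of u
  have hut_all : ∀ t ∈ Icc (0:ℝ) T, ∀ x : ℝ,
      HasDerivAt (fun s => u s x) (G2fun L H φ (t, x)) t := by
    intro t ht x
    have hmeas := (hslmap x).stronglyMeasurableAtFilter (μ := volume) (hslopen x) t (hslIcc x ht)
    have hca : ContinuousAt (fun s => G2fun L H φ (s, x)) t :=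
      (hslmap x).continuousAt ((hslopen x).mem_nhds (hslIcc x ht))
    have hI := intervalIntegral.integral_hasDerivAt_left (hint t ht x) hmeas hca
    have hfeq : (fun s => u s x)
        = fun s => uT x - ∫ s' in s..T, G2fun L H φ (s', x) := funext fun s => hu s x
    rw [hfeq]
    exact ((hasDerivAt_const t (uT x)).sub hI).congr_deriv (by ring)
  -- spatial derivative of u
  have hϖcont : ContinuousOn ϖ (Icc 0 T) := hϖ.continuousOn
  have hLVslice : ∀ x : ℝ, ContinuousOn (fun s => LVfun L φ (s, x)) {s : ℝ | (s, x) ∈ U} :=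
    fun x => hLVC.continuousOn.comp
      ((continuous_id.prodMk continuous_const).continuousOn) (fun s hs => hs)
  have hGyslice : ∀ x : ℝ, ContinuousOn
      (fun s => fderiv ℝ (G2fun L H φ) (s, x) ((0:ℝ),(1:ℝ))) {s : ℝ | (s, x) ∈ U} :=
    fun x => hGycont.comp
      ((continuous_id.prodMk continuous_const).continuousOn) (fun s hs => hs)
  have hux_all : ∀ t ∈ Icc (0:ℝ) T, ∀ x : ℝ,
      HasDerivAt (fun y => u t y) (-(LVfun L φ (t, x)) - ϖ t) x := by
    intro t ht x
    have hIoc : Set.uIoc t T = Ioc t T := uIoc_of_le ht.2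
    have hIocU : ∀ y : ℝ, Ioc t T ⊆ {s : ℝ | (s, y) ∈ U} :=
      fun y s hs => hUmem s ⟨le_trans ht.1 hs.1.le, hs.2⟩ y
    -- (a) differentiation under the integral sign
    have hKU : Icc t T ×ˢ Metric.closedBall x 1 ⊆ U := by
      rintro ⟨s, y⟩ ⟨hs, -⟩
      exact hUmem s ⟨le_trans ht.1 hs.1, hs.2⟩ y
    obtain ⟨C, hC⟩ := (isCompact_Icc.prod (isCompact_closedBall x 1)).exists_bound_of_continuousOn
      (hGycont.mono hKU)
    have hder := (intervalIntegral.hasDerivAt_integral_of_dominated_loc_of_deriv_le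
      (F := fun y s => G2fun L H φ (s, y))
      (F' := fun y s => fderiv ℝ (G2fun L H φ) (s, y) ((0:ℝ),(1:ℝ)))
      (x₀ := x) (a := t) (b := T) (bound := fun _ => C) (μ := volume) (s := Metric.ball x 1)
      (Metric.ball_mem_nhds x one_pos)
      (Filter.Eventually.of_forall fun y => by
        rw [hIoc]
        exact ((hslmap y).mono (hIocU y)).aestronglyMeasurable measurableSet_Ioc)
      (hint t ht x)
      (by
        rw [hIoc]
        exact ((hGyslice x).mono (hIocU x)).aestronglyMeasurable measurableSet_Ioc)
      (Filter.Eventually.of_forall fun s hs y hy => by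
        refine hC (s, y) ⟨Ioc_subset_Icc_self (hIoc ▸ hs), Metric.ball_subset_closedBall hy⟩)
      intervalIntegrable_const
      (Filter.Eventually.of_forall fun s hs y hy =>
        hasDerivAt_snd_slice (hG2diff (s, y) (hIocU y (hIoc ▸ hs))))).2
    -- (b) the value of the integral, via Euler–Lagrange and FTC
    have hFTC : (∫ s in t..T, -(fderiv ℝ (G2fun L H φ) (s, x) ((0:ℝ),(1:ℝ))))
        = (LVfun L φ (T, x) + ϖ T) - (LVfun L φ (t, x) + ϖ t) := by
      refine intervalIntegral.integral_eq_sub_of_hasDeriv_right_of_le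
        (f := fun s => LVfun L φ (s, x) + ϖ s)
        (f' := fun s => -(fderiv ℝ (G2fun L H φ) (s, x) ((0:ℝ),(1:ℝ)))) ht.2 ?_ ?_ ?_
      · exact (((hLVslice x).mono ((Icc_subset_Icc ht.1 le_rfl).trans (hslIcc x))).add
          (hϖcont.mono (Icc_subset_Icc ht.1 le_rfl)))
      · intro s hs
        have hs0 : s ∈ Ioo (0:ℝ) T := ⟨lt_of_le_of_lt ht.1 hs.1, hs.2⟩
        have hsU : (s, x) ∈ U := hUmem s ⟨hs0.1.le, hs0.2.le⟩ x
        have hA : HasDerivAt (fun s' => LVfun L φ (s', x))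
            (fderiv ℝ (LVfun L φ) (s, x) ((1:ℝ),(0:ℝ))) s :=
          hasDerivAt_fst_slice (hLVdiff _ hsU)
        have hP : DifferentiableAt ℝ ϖ s :=
          ((hϖ.contDiffAt (Icc_mem_nhds hs0.1 hs0.2)).differentiableAt one_ne_zero)
        have hw : HasDerivAt (fun s' => LVfun L φ (s', x) + ϖ s')
            (fderiv ℝ (LVfun L φ) (s, x) ((1:ℝ),(0:ℝ)) + deriv ϖ s) s := hA.add hP.hasDerivAt
        have hELs := hEL s hs0 x
        rw [(hasDerivAt_snd_slice (hG2diff _ hsU)).deriv, hw.deriv] at hELs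
        have heq : -(fderiv ℝ (G2fun L H φ) (s, x) ((0:ℝ),(1:ℝ)))
            = fderiv ℝ (LVfun L φ) (s, x) ((1:ℝ),(0:ℝ)) + deriv ϖ s := by linarith
        show HasDerivWithinAt (fun s => LVfun L φ (s, x) + ϖ s)
          (-(fderiv ℝ (G2fun L H φ) (s, x) ((0:ℝ),(1:ℝ)))) (Ioi s) s
        rw [heq]
        exact hw.hasDerivWithinAt
      · apply ContinuousOn.intervalIntegrable
        apply ContinuousOn.neg
        apply (hGyslice x).mono
        rw [uIcc_of_le ht.2]
        exact (Icc_subset_Icc ht.1 le_rfl).trans (hslIcc x)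
    -- (c) combine
    have huTd : HasDerivAt uT (deriv uT x) x := (huT.differentiable one_ne_zero x).hasDerivAt
    have hfeq : (fun y => u t y) = fun y => uT y - ∫ s in t..T, G2fun L H φ (s, y) :=
      funext fun y => hu t y
    have hval : deriv uT x - (∫ s in t..T, fderiv ℝ (G2fun L H φ) (s, x) ((0:ℝ),(1:ℝ)))
        = -(LVfun L φ (t, x)) - ϖ t := by
      rw [intervalIntegral.integral_neg] at hFTC
      rw [← hterm x]
      linarith
    rw [hfeq, ← hval]
    exact huTd.sub hder
  -- the Legendre-duality consequence, pointwise
  have hHpm : ∀ t ∈ Icc (0:ℝ) T, ∀ y : ℝ,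
      deriv (fun p => H y p) (ϖ t + deriv (fun y' => u t y') y) * m t y = pd1 φ (t, y) := by
    intro t ht y
    rw [(hux_all t ht y).deriv, hm t y]
    have harg : ϖ t + (-(LVfun L φ (t, y)) - ϖ t) = -(LVfun L φ (t, y)) := by ring
    rw [harg]
    have hleg := (legendre_duality L H hLreg hLconv hH hHreg y (Vfun φ (t, y))).2
    rw [hpLv y (Vfun φ (t, y))] at hleg
    rw [show LVfun L φ (t, y) = pd2 L (y, Vfun φ (t, y)) from rfl, hleg]
    show -(-(pd1 φ (t, y) / pd2 φ (t, y))) * pd2 φ (t, y) = pd1 φ (t, y)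
    rw [neg_neg, div_mul_cancel₀ _ (ne_of_gt (hφxpos t ht y))]
  refine ⟨?_, ?_, ?_, ?_⟩
  · -- Hamilton–Jacobi
    intro t ht x
    rw [(hut_all t ht x).deriv, (hux_all t ht x).deriv]
    have harg : ϖ t + (-(LVfun L φ (t, x)) - ϖ t) = -(LVfun L φ (t, x)) := by ring
    rw [harg]
    show -(G2fun L H φ (t, x)) + G2fun L H φ (t, x) = 0
    ring
  · -- transport
    intro t ht x
    have h1 : (fun s => m s x) = fun s => pd2 φ (s, x) := funext fun s => hm s x
    have h2 : (fun y => deriv (fun p => H y p) (ϖ t + deriv (fun y' => u t y') y) * m t y)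
        = fun y => pd1 φ (t, y) := funext fun y => hHpm t ht y
    rw [h1, h2, clairaut hφ t x, sub_self]
  · -- balance
    intro t ht
    have h2 : (fun x => deriv (fun p => H x p) (ϖ t + deriv (fun y => u t y) x) * m t x)
        = fun x => pd1 φ (t, x) := funext fun x => hHpm t ht x
    rw [h2]
    have hb := hbal t ht
    rw [integral_add (hφtint t ht) ((hφxint t ht).const_mul (Q t)),
        MeasureTheory.integral_const_mul, hφxprob t ht, mul_one] at hb
    linarith
  · -- terminal condition
    intro x
    rw [hu T x, intervalIntegral.integral_same, sub_zero]
end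

section
/- Let T > 0, let H(x,p) = p²/2 (the Legendre transform of L(x,v) = v²/2), let Q : [0,T] → ℝ be continuous, and let m₀ be a C¹ probability density on ℝ. Define ϖ(t) = -Q(t), u(t,x) = -(1/2) ∫_t^T Q(s)² ds, and m(t,x) = m₀( x - ∫_0^t Q(s) ds ). Then (u, m, ϖ) solves the MFG price system: (i) -u_t + (ϖ(t) + u_x)²/2 = 0 on [0,T] × ℝ; (ii) m_t - ( (ϖ(t) + u_x) m )_x = 0 on [0,T] × ℝ; (iii) -∫_ℝ (ϖ(t) + u_x) m dx = Q(t) for all t ∈ [0,T]; (iv) m(0,·) = m₀ and u(T,·) = 0. In particular, in the quadratic case with zero terminal cost the equilibrium price is ϖ = -Q. -/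
open Real Set MeasureTheory intervalIntegral

/-- explicit solution of the price-formation MFG in the quadratic case
`H(x,p) = p²/2`, zero terminal cost.  With `ϖ(t) = -Q(t)`,
`u(t,x) = -(1/2)∫_t^T Q(s)² ds` and `m(t,x) = m₀(x - ∫_0^t Q(s) ds)`, the triple
`(u, m, ϖ)` solves the MFG price system; in particular the equilibrium price is
`ϖ = -Q`. -/
theorem quadratic_mfg_explicit_solution
    (T : ℝ) (hT : 0 < T)
    (Q : ℝ → ℝ) (hQ : Continuous Q)
    (m₀ : ℝ → ℝ)
    -- m₀ is a C¹ probability density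
    (hm₀reg : ContDiff ℝ 1 m₀)
    (hm₀nonneg : ∀ x : ℝ, 0 ≤ m₀ x)
    (hm₀int : Integrable m₀)
    (hm₀prob : (∫ x : ℝ, m₀ x) = 1) :
    ∀ ϖ : ℝ → ℝ, ∀ u m : ℝ → ℝ → ℝ,
      (∀ t : ℝ, ϖ t = -Q t) →
      (∀ t x : ℝ, u t x = -(1 / 2) * ∫ s in t..T, (Q s) ^ 2) →
      (∀ t x : ℝ, m t x = m₀ (x - ∫ s in (0:ℝ)..t, Q s)) →
      -- (i) Hamilton–Jacobi equation: -u_t + (ϖ + u_x)²/2 = 0 on [0,T] × ℝ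
      ((∀ t ∈ Icc (0 : ℝ) T, ∀ x : ℝ,
        -(deriv (fun s => u s x) t) + (ϖ t + deriv (fun y => u t y) x) ^ 2 / 2 = 0) ∧
      -- (ii) transport equation: m_t - ((ϖ + u_x) m)_x = 0 on [0,T] × ℝ
      (∀ t ∈ Icc (0 : ℝ) T, ∀ x : ℝ,
        deriv (fun s => m s x) t -
          deriv (fun y => (ϖ t + deriv (fun y' => u t y') y) * m t y) x = 0) ∧
      -- (iii) balance condition: -∫ (ϖ + u_x) m dx = Q(t)
      (∀ t ∈ Icc (0 : ℝ) T,
        -(∫ x : ℝ, (ϖ t + deriv (fun y => u t y) x) * m t x) = Q t) ∧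
      -- (iv) initial and terminal conditions
      ((∀ x : ℝ, m 0 x = m₀ x) ∧ (∀ x : ℝ, u T x = 0))) := by
  intro ϖ u m hϖ hu hm
  have hm₀diff : Differentiable ℝ m₀ := hm₀reg.differentiable one_ne_zero
  -- u is constant in x
  have hux : ∀ t x : ℝ, deriv (fun y => u t y) x = 0 := by
    intro t x
    have : (fun y : ℝ => u t y) = fun _ => -(1 / 2) * ∫ s in t..T, (Q s) ^ 2 := by
      funext y; exact hu t y
    rw [this, deriv_const]
  -- derivative of u in t
  have hut : ∀ t x : ℝ, deriv (fun s => u s x) t = (1 / 2) * (Q t) ^ 2 := by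
    intro t x
    have h1 : (fun s : ℝ => u s x) = fun s => (1 / 2) * ∫ τ in T..s, (Q τ) ^ 2 := by
      funext s
      rw [hu s x, intervalIntegral.integral_symm]
      ring
    have h2 : HasDerivAt (fun s : ℝ => ∫ τ in T..s, (Q τ) ^ 2) ((Q t) ^ 2) t :=
      ((hQ.pow 2).integral_hasStrictDerivAt T t).hasDerivAt
    rw [h1]
    exact (h2.const_mul ((1:ℝ)/2)).deriv
  -- F and its derivative
  have hF : ∀ t : ℝ, HasDerivAt (fun s => ∫ τ in (0:ℝ)..s, Q τ) (Q t) t := fun t =>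
    (hQ.integral_hasStrictDerivAt 0 t).hasDerivAt
  refine ⟨?_, ?_, ?_, ?_, ?_⟩
  · intro t ht x
    rw [hut t x, hux t x, hϖ t]
    ring
  · intro t ht x
    set c : ℝ := ∫ τ in (0:ℝ)..t, Q τ with hc
    -- time derivative of m
    have hmt : deriv (fun s => m s x) t = -Q t * deriv m₀ (x - c) := by
      have h1 : (fun s : ℝ => m s x) = fun s => m₀ (x - ∫ τ in (0:ℝ)..s, Q τ) := by
        funext s; exact hm s x
      have h2 : HasDerivAt (fun s : ℝ => x - ∫ τ in (0:ℝ)..s, Q τ) (0 - Q t) t :=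
        (hasDerivAt_const t x).sub (hF t)
      have h3 := (hm₀diff (x - c)).hasDerivAt.comp t h2
      simp only [Function.comp_def] at h3
      rw [h1, h3.deriv]; ring
    -- space derivative
    have hfun : (fun y => (ϖ t + deriv (fun y' => u t y') y) * m t y)
        = fun y => -Q t * m₀ (y - c) := by
      funext y; rw [hux t y, hϖ t, hm t y, ← hc]; ring_nf
    have hmx : deriv (fun y => -Q t * m₀ (y - c)) x = -Q t * deriv m₀ (x - c) := by
      have h2 : HasDerivAt (fun y : ℝ => y - c) 1 x := (hasDerivAt_id x).sub_const c
      have h3 := (hm₀diff (x - c)).hasDerivAt.comp x h2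
      simp only [Function.comp_def] at h3
      have h4 := h3.const_mul (-Q t)
      rw [h4.deriv]; ring
    rw [hmt, hfun, hmx]; ring
  · intro t ht
    set c : ℝ := ∫ τ in (0:ℝ)..t, Q τ with hc
    have : (∫ x : ℝ, (ϖ t + deriv (fun y => u t y) x) * m t x)
        = -Q t * ∫ x : ℝ, m₀ (x - c) := by
      rw [← MeasureTheory.integral_const_mul]
      congr 1; funext x
      rw [hux t x, hϖ t, hm t x, ← hc]; ring_nf
    rw [this, integral_sub_right_eq_self m₀ c, hm₀prob]
    ring
  · intro x
    rw [hm 0 x]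
    simp
  · intro x
    rw [hu T x]
    simp
end

section
/- Let T > 0, let L(x,v) = v²/2 (so L_v(x,v) = v and H(x,p) = p²/2), let Q : [0,T] → ℝ be C¹, let u_T ≡ 0, and let m₀ be a C¹, everywhere positive probability density on ℝ with finite first moment; set M₀(x) = ∫_{-∞}^x m₀(y) dy and ϖ(t) = -Q(t). Define φ(t,x) = M₀( x - ∫_0^t Q(s) ds ). Then: (i) φ_x(t,·) = m₀(· - ∫_0^t Q) is a probability density for every t, and -φ_t(t,x)/φ_x(t,x) = Q(t); (ii) φ satisfies the Euler–Lagrange equation ∂_x[ H(x, -L_v(x, -φ_t/φ_x)) ] + ∂_t[ L_v(x, -φ_t/φ_x) + ϖ(t) ] = 0 on (0,T) × ℝ; (iii) φ satisfies the terminal condition -L_v(x, -φ_t(T,x)/φ_x(T,x)) - ϖ(T) = 0 = u_T'(x); and (iv) φ satisfies the integrated balance constraint ∫_ℝ ( φ(t,x) - φ(0,x) ) dx = -∫_0^t Q(s) ds for all t ∈ [0,T]. -/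
open Real Set MeasureTheory intervalIntegral

private lemma cdf_hasDerivAt (m₀ : ℝ → ℝ) (hc : Continuous m₀) (hi : Integrable m₀) (x : ℝ) :
    HasDerivAt (fun z => ∫ y in Iic z, m₀ y) (m₀ x) x := by
  have key : ∀ z : ℝ, (∫ y in Iic z, m₀ y) = (∫ y in Iic 0, m₀ y) + ∫ y in (0:ℝ)..z, m₀ y := by
    intro z
    rw [← intervalIntegral.integral_Iic_sub_Iic hi.integrableOn hi.integrableOn]
    ring
  have hd : HasDerivAt (fun z => (∫ y in Iic 0, m₀ y) + ∫ y in (0:ℝ)..z, m₀ y) (m₀ x) x :=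
    (intervalIntegral.integral_hasDerivAt_right (hc.intervalIntegrable 0 x)
      (hc.stronglyMeasurable.stronglyMeasurableAtFilter) hc.continuousAt).const_add _
  exact hd.congr_of_eventuallyEq (Filter.Eventually.of_forall key)

private lemma shift_nonneg_aux (m₀ M₀ : ℝ → ℝ) (hc : Continuous m₀) (hpos : ∀ x, 0 ≤ m₀ x)
    (hi : Integrable m₀) (hp : (∫ x : ℝ, m₀ x) = 1)
    (hM : ∀ x : ℝ, M₀ x = ∫ y in Iic x, m₀ y) (a : ℝ) (ha : 0 ≤ a) :
    Integrable (fun x => M₀ x - M₀ (x - a)) ∧ (∫ x : ℝ, (M₀ x - M₀ (x - a))) = a := by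
  have hg : ∀ x : ℝ, M₀ x - M₀ (x - a) = ∫ y in Ioc (x - a) x, m₀ y := by
    intro x
    rw [hM, hM, intervalIntegral.integral_Iic_sub_Iic hi.integrableOn hi.integrableOn,
      intervalIntegral.integral_of_le (by linarith)]
  have hgn : ∀ x : ℝ, 0 ≤ M₀ x - M₀ (x - a) := by
    intro x
    rw [hg]
    exact setIntegral_nonneg measurableSet_Ioc fun y _ => hpos y
  have hMc : Continuous M₀ := by
    have : M₀ = fun z => ∫ y in Iic z, m₀ y := funext hM
    rw [this]
    exact continuous_iff_continuousAt.2 fun x => (cdf_hasDerivAt m₀ hc hi x).continuousAt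
  have hgc : Continuous fun x => M₀ x - M₀ (x - a) :=
    hMc.sub (hMc.comp (continuous_id.sub continuous_const))
  -- the key lintegral computation
  set S : Set (ℝ × ℝ) := {p : ℝ × ℝ | p.1 - a < p.2 ∧ p.2 ≤ p.1} with hS
  have hSm : MeasurableSet S :=
    (measurableSet_lt (measurable_fst.sub measurable_const) measurable_snd).inter
      (measurableSet_le measurable_snd measurable_fst)
  set F : ℝ × ℝ → ENNReal := S.indicator (fun p => ENNReal.ofReal (m₀ p.2)) with hF
  have hFm : Measurable F :=
    (ENNReal.measurable_ofReal.comp (hc.measurable.comp measurable_snd)).indicator hSm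
  have e1 : ∀ x : ℝ, ENNReal.ofReal (M₀ x - M₀ (x - a)) = ∫⁻ y : ℝ, F (x, y) := by
    intro x
    rw [hg, MeasureTheory.ofReal_integral_eq_lintegral_ofReal hi.integrableOn
      (Filter.Eventually.of_forall fun y => hpos y), ← lintegral_indicator measurableSet_Ioc]
    refine lintegral_congr fun y => ?_
    simp only [hF, hS, Set.indicator_apply, Set.mem_Ioc, Set.mem_setOf_eq]
  have e2 : ∀ y : ℝ, (∫⁻ x : ℝ, F (x, y)) = ENNReal.ofReal (m₀ y) * ENNReal.ofReal a := by
    intro y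
    have : (fun x : ℝ => F (x, y)) = (Ico y (y + a)).indicator (fun _ => ENNReal.ofReal (m₀ y)) := by
      funext x
      simp only [hF, hS, Set.indicator_apply, Set.mem_setOf_eq, Set.mem_Ico]
      congr 1
      simp only [eq_iff_iff]
      constructor
      · rintro ⟨h1, h2⟩; exact ⟨h2, by linarith⟩
      · rintro ⟨h1, h2⟩; exact ⟨by linarith, h1⟩
    rw [this, lintegral_indicator measurableSet_Ico, setLIntegral_const, Real.volume_Ico]
    congr 1
    ring_nf
  have hm₀l : (∫⁻ y : ℝ, ENNReal.ofReal (m₀ y)) = 1 := by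
    rw [← MeasureTheory.ofReal_integral_eq_lintegral_ofReal hi
      (Filter.Eventually.of_forall fun y => hpos y), hp, ENNReal.ofReal_one]
  have L : (∫⁻ x : ℝ, ENNReal.ofReal (M₀ x - M₀ (x - a))) = ENNReal.ofReal a := by
    calc (∫⁻ x : ℝ, ENNReal.ofReal (M₀ x - M₀ (x - a)))
        = ∫⁻ x : ℝ, ∫⁻ y : ℝ, F (x, y) := by simp_rw [e1]
      _ = ∫⁻ y : ℝ, ∫⁻ x : ℝ, F (x, y) := by
          apply lintegral_lintegral_swap
          exact hFm.aemeasurable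
      _ = ∫⁻ y : ℝ, ENNReal.ofReal (m₀ y) * ENNReal.ofReal a := by simp_rw [e2]
      _ = (∫⁻ y : ℝ, ENNReal.ofReal (m₀ y)) * ENNReal.ofReal a :=
          lintegral_mul_const _ (ENNReal.measurable_ofReal.comp hc.measurable)
      _ = ENNReal.ofReal a := by rw [hm₀l, one_mul]
  have hint : Integrable (fun x => M₀ x - M₀ (x - a)) := by
    refine ⟨hgc.aestronglyMeasurable, ?_⟩
    rw [hasFiniteIntegral_iff_ofReal (Filter.Eventually.of_forall hgn), L]
    exact ENNReal.ofReal_lt_top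
  refine ⟨hint, ?_⟩
  rw [MeasureTheory.integral_eq_lintegral_of_nonneg_ae (Filter.Eventually.of_forall hgn)
    hgc.aestronglyMeasurable, L, ENNReal.toReal_ofReal ha]

private lemma shift_general (m₀ M₀ : ℝ → ℝ) (hc : Continuous m₀) (hpos : ∀ x, 0 ≤ m₀ x)
    (hi : Integrable m₀) (hp : (∫ x : ℝ, m₀ x) = 1)
    (hM : ∀ x : ℝ, M₀ x = ∫ y in Iic x, m₀ y) (a : ℝ) :
    (∫ x : ℝ, (M₀ (x - a) - M₀ x)) = -a := by
  rcases le_or_gt 0 a with ha | ha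
  · obtain ⟨hint, hval⟩ := shift_nonneg_aux m₀ M₀ hc hpos hi hp hM a ha
    have h1 : (fun x : ℝ => M₀ (x - a) - M₀ x) = fun x => -(M₀ x - M₀ (x - a)) := by
      funext x; ring
    rw [h1, MeasureTheory.integral_neg, hval]
  · set b : ℝ := -a with hb
    have hb0 : 0 ≤ b := by simp [hb]; linarith
    obtain ⟨hint, hval⟩ := shift_nonneg_aux m₀ M₀ hc hpos hi hp hM b hb0
    have key : (fun x : ℝ => M₀ (x - a) - M₀ x) = fun x => (fun z => M₀ z - M₀ (z - b)) (x + b) := by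
      funext x
      have h1 : x - a = x + b := by rw [hb]; ring
      have h2 : x + b - b = x := by ring
      simp only [h1, h2]
    rw [key, MeasureTheory.integral_add_right_eq_self (fun z => M₀ z - M₀ (z - b)) b, hval, hb]

/-- explicit potential for the quadratic price-formation MFG.
With `L(x,v) = v²/2` (so `L_v(x,v) = v`, `H(x,p) = p²/2`), `ϖ = -Q`, zero terminal
cost, and `φ(t,x) = M₀(x - ∫_0^t Q)` where `M₀` is the CDF of `m₀`:
(i) `φ_x(t,·) = m₀(· - ∫_0^t Q)` is a probability density and `-φ_t/φ_x = Q(t)`;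
(ii) `φ` satisfies the Euler–Lagrange equation
  `∂_x[H(x, -L_v(x, -φ_t/φ_x))] + ∂_t[L_v(x, -φ_t/φ_x) + ϖ(t)] = 0` on `(0,T) × ℝ`;
(iii) the terminal condition `-L_v(x, -φ_t(T,x)/φ_x(T,x)) - ϖ(T) = 0 = uT'(x)`;
(iv) the integrated balance constraint `∫_ℝ (φ(t,x) - φ(0,x)) dx = -∫_0^t Q`. -/
theorem quadratic_mfg_potential_solution
    (T : ℝ) (hT : 0 < T)
    (Q : ℝ → ℝ) (hQ : ContDiff ℝ 1 Q)
    (m₀ : ℝ → ℝ) (M₀ : ℝ → ℝ) (ϖ : ℝ → ℝ) (φ : ℝ → ℝ → ℝ)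
    -- m₀ is a C¹, everywhere positive probability density with finite first moment
    (hm₀reg : ContDiff ℝ 1 m₀)
    (hm₀pos : ∀ x : ℝ, 0 < m₀ x)
    (hm₀int : Integrable m₀)
    (hm₀prob : (∫ x : ℝ, m₀ x) = 1)
    (hmoment : Integrable (fun y => |y| * m₀ y))
    -- M₀ is the CDF of m₀
    (hM₀ : ∀ x : ℝ, M₀ x = ∫ y in Iic x, m₀ y)
    -- ϖ = -Q
    (hϖ : ∀ t : ℝ, ϖ t = -Q t)
    -- φ(t,x) = M₀(x - ∫_0^t Q(s) ds)
    (hφ : ∀ t x : ℝ, φ t x = M₀ (x - ∫ s in (0:ℝ)..t, Q s)) :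
    -- (i) φ_x(t,·) is the shifted density, a probability density, and -φ_t/φ_x = Q(t)
    ((∀ t ∈ Icc (0 : ℝ) T,
      (∀ x : ℝ, deriv (fun y => φ t y) x = m₀ (x - ∫ s in (0:ℝ)..t, Q s)) ∧
      (∀ x : ℝ, 0 ≤ deriv (fun y => φ t y) x) ∧
      Integrable (fun x => deriv (fun y => φ t y) x) ∧
      (∫ x : ℝ, deriv (fun y => φ t y) x) = 1 ∧
      (∀ x : ℝ, -(deriv (fun s => φ s x) t) / deriv (fun y => φ t y) x = Q t)) ∧
    -- (ii) Euler–Lagrange equation on (0,T) × ℝ (with L_v(x,v) = v, H(x,p) = p²/2)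
    (∀ t ∈ Ioo (0 : ℝ) T, ∀ x : ℝ,
      deriv (fun y =>
          (-(-(deriv (fun s => φ s y) t / deriv (fun y' => φ t y') y))) ^ 2 / 2) x
      + deriv (fun s =>
          (-(deriv (fun s' => φ s' x) s / deriv (fun y => φ s y) x)) + ϖ s) t = 0) ∧
    -- (iii) terminal condition: -L_v(x, -φ_t(T,x)/φ_x(T,x)) - ϖ(T) = 0 = uT'(x)
    (∀ x : ℝ,
      -(-(deriv (fun s => φ s x) T / deriv (fun y => φ T y) x)) - ϖ T = 0) ∧
    -- (iv) integrated balance constraint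
    (∀ t ∈ Icc (0 : ℝ) T,
      (∫ x : ℝ, (φ t x - φ 0 x)) = -∫ s in (0:ℝ)..t, Q s)) := by
  have hQc : Continuous Q := hQ.continuous
  have hmc : Continuous m₀ := hm₀reg.continuous
  have hM0d : ∀ x : ℝ, HasDerivAt M₀ (m₀ x) x := fun x =>
    (cdf_hasDerivAt m₀ hmc hm₀int x).congr_of_eventuallyEq
      (Filter.Eventually.of_forall fun y => hM₀ y)
  set A : ℝ → ℝ := fun t => ∫ s in (0:ℝ)..t, Q s with hA
  have hAd : ∀ t : ℝ, HasDerivAt A (Q t) t := fun t =>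
    intervalIntegral.integral_hasDerivAt_right (hQc.intervalIntegrable 0 t)
      (hQc.stronglyMeasurable.stronglyMeasurableAtFilter) hQc.continuousAt
  have hφx : ∀ t x : ℝ, HasDerivAt (fun y => φ t y) (m₀ (x - A t)) x := by
    intro t x
    have h1 : HasDerivAt (fun y : ℝ => y - A t) 1 x := (hasDerivAt_id x).sub_const _
    have h2 := (hM0d (x - A t)).comp x h1
    rw [mul_one] at h2
    exact h2.congr_of_eventuallyEq (Filter.Eventually.of_forall fun y => hφ t y)
  have hφt : ∀ t x : ℝ, HasDerivAt (fun s => φ s x) (m₀ (x - A t) * (-Q t)) t := by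
    intro t x
    have h1 : HasDerivAt (fun s : ℝ => x - A s) (-Q t) t := (hAd t).const_sub x
    have h2 := (hM0d (x - A t)).comp t h1
    exact h2.congr_of_eventuallyEq (Filter.Eventually.of_forall fun s => hφ s x)
  have hdx : ∀ t x : ℝ, deriv (fun y => φ t y) x = m₀ (x - A t) := fun t x => (hφx t x).deriv
  have hdt : ∀ t x : ℝ, deriv (fun s => φ s x) t = m₀ (x - A t) * (-Q t) := fun t x =>
    (hφt t x).deriv
  have hne : ∀ t x : ℝ, m₀ (x - A t) ≠ 0 := fun t x => (hm₀pos _).ne'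
  have hratio : ∀ t x : ℝ, deriv (fun s => φ s x) t / deriv (fun y => φ t y) x = -Q t := by
    intro t x
    rw [hdt, hdx, mul_comm, mul_div_assoc, div_self (hne t x), mul_one]
  refine ⟨fun t _ => ⟨fun x => hdx t x, ?_, ?_, ?_, ?_⟩, ?_, ?_, ?_⟩
  · intro x
    rw [hdx]
    exact (hm₀pos _).le
  · have : (fun x => deriv (fun y => φ t y) x) = fun x => m₀ (x - A t) := funext (hdx t)
    rw [this]
    exact hm₀int.comp_sub_right _
  · simp_rw [hdx]
    rw [MeasureTheory.integral_sub_right_eq_self m₀ (A t)]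
    exact hm₀prob
  · intro x
    rw [neg_div, hratio t x, neg_neg]
  · intro t _ x
    have h1 : (fun y => (-(-(deriv (fun s => φ s y) t / deriv (fun y' => φ t y') y))) ^ 2 / 2)
        = fun _ : ℝ => (Q t) ^ 2 / 2 := by
      funext y
      rw [hratio t y]
      ring
    have h2 : (fun s => (-(deriv (fun s' => φ s' x) s / deriv (fun y => φ s y) x)) + ϖ s)
        = fun _ : ℝ => (0 : ℝ) := by
      funext s
      rw [hratio s x, hϖ s]
      ring
    rw [h1, h2, deriv_const, deriv_const]
    norm_num
  · intro x
    rw [hratio T x, hϖ T]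
    ring
  · intro t _
    have h0 : ∀ x : ℝ, φ 0 x = M₀ x := by
      intro x
      rw [hφ]
      simp [hA]
    have key : (fun x => φ t x - φ 0 x) = fun x => M₀ (x - A t) - M₀ x := by
      funext x
      rw [hφ, h0]
    rw [key]
    exact shift_general m₀ M₀ hmc (fun x => (hm₀pos x).le) hm₀int hm₀prob hM₀ (A t)
end
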